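/- Let Z be any type and let j : M₃ × M₃ → Z satisfy j((t + Q x₁, Q n₁), (t + Q x₂, Q n₂)) = j((x₁, n₁), (x₂, n₂)) for all points of M₃ × M₃, all t ∈ ℝ³ and all linear isometry equivalences Q of ℝ³ (i.e. j is an E(3) invariant). Then there exists a function F : ℝ⁴ → Z such that j(p₁, p₂) = F(ι₁(p₁,p₂), ι₂(p₁,p₂), ι₃(p₁,p₂), ι₄(p₁,p₂)) for all (p₁, p₂) ∈ M₃ × M₃. That is, the collection (ι₁, ι₂, ι₃, ι₄) is universal. -/

import Mathlib

open scoped RealInnerProductSpace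
open Finset

set_option maxRecDepth 4000 in
lemma gram_isometry {E : Type*} [NormedAddCommGroup E] [InnerProductSpace ℝ E]
    [FiniteDimensional ℝ E] {ι : Type*} [Fintype ι] [DecidableEq ι] (v w : ι → E)
    (h : ∀ i j, ⟪v i, v j⟫ = ⟪w i, w j⟫) :
    ∃ Q : E ≃ₗᵢ[ℝ] E, ∀ i, Q (v i) = w i := by
  let T : (ι → ℝ) →ₗ[ℝ] E := Fintype.linearCombination ℝ v
  let T' : (ι → ℝ) →ₗ[ℝ] E := Fintype.linearCombination ℝ w
  have hTT : ∀ c d, ⟪T c, T d⟫ = ⟪T' c, T' d⟫ := by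
    intro c d
    simp only [T, T', Fintype.linearCombination_apply, sum_inner, inner_sum,
      real_inner_smul_left, real_inner_smul_right, h]
  have hnorm : ∀ c, ‖T c‖ = ‖T' c‖ := by
    intro c
    have := hTT c c
    rw [real_inner_self_eq_norm_sq, real_inner_self_eq_norm_sq] at this
    exact (sq_eq_sq₀ (norm_nonneg _) (norm_nonneg _)).mp (by simpa [sq] using this)
  have hker : LinearMap.ker T = LinearMap.ker T' := by
    ext c
    simp only [LinearMap.mem_ker]
    rw [← norm_eq_zero, hnorm c, norm_eq_zero]
  let e : LinearMap.range T ≃ₗ[ℝ] LinearMap.range T' :=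
    T.quotKerEquivRange.symm.trans
      ((Submodule.quotEquivOfEq _ _ hker).trans T'.quotKerEquivRange)
  have he : ∀ c : ι → ℝ, (e ⟨T c, LinearMap.mem_range_self T c⟩ : E) = T' c := by
    intro c
    show (T'.quotKerEquivRange ((Submodule.quotEquivOfEq _ _ hker)
      (T.quotKerEquivRange.symm ⟨T c, LinearMap.mem_range_self T c⟩)) : E) = T' c
    rw [T.quotKerEquivRange_symm_apply_image c (LinearMap.mem_range_self T c),
      Submodule.mkQ_apply, Submodule.quotEquivOfEq_mk,
      LinearMap.quotKerEquivRange_apply_mk]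
  have henorm : ∀ s : LinearMap.range T, ‖(e s : E)‖ = ‖(s : E)‖ := by
    rintro ⟨s, c, rfl⟩
    rw [he c]
    exact (hnorm c).symm
  let L : LinearMap.range T →ₗᵢ[ℝ] E :=
    ⟨(LinearMap.range T').subtype.comp e.toLinearMap, henorm⟩
  have hL : ∀ c, L.extend (T c) = T' c := by
    intro c
    have h2 := L.extend_apply ⟨T c, LinearMap.mem_range_self T c⟩
    rw [h2]
    exact he c
  refine ⟨L.extend.toLinearIsometryEquiv rfl, fun i => ?_⟩
  have hv : v i = T (Pi.single i 1) := by
    simp [T, Fintype.linearCombination_apply, Pi.single_apply]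
  have hw : w i = T' (Pi.single i 1) := by
    simp [T', Fintype.linearCombination_apply, Pi.single_apply]
  rw [LinearIsometry.toLinearIsometryEquiv_apply, hv, hw]
  exact hL (Pi.single i 1)

/-- Three-dimensional position-orientation space `M₃ = {(x, n) ∈ ℝ³ × ℝ³ | ‖n‖ = 1}`. -/
abbrev M3 : Type :=
  {p : EuclideanSpace ℝ (Fin 3) × EuclideanSpace ℝ (Fin 3) // ‖p.2‖ = 1}

/-- The action of the Euclidean group element `(t, Q)` on `M₃`:
`(t, Q) • (x, n) = (t + Q x, Q n)`. -/
noncomputable def E3act (t : EuclideanSpace ℝ (Fin 3))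
    (Q : EuclideanSpace ℝ (Fin 3) ≃ₗᵢ[ℝ] EuclideanSpace ℝ (Fin 3)) (p : M3) : M3 :=
  ⟨(t + Q p.1.1, Q p.1.2), by rw [Q.norm_map]; exact p.2⟩

/-- The collection of four invariants `ι₁, ι₂, ι₃, ι₄ : M₃ × M₃ → ℝ`. -/
noncomputable def iota (p : M3 × M3) : ℝ × ℝ × ℝ × ℝ :=
  (⟪p.2.1.1 - p.1.1.1, p.1.1.2⟫, ⟪p.2.1.1 - p.1.1.1, p.2.1.2⟫,
   ⟪p.2.1.1 - p.1.1.1, p.2.1.1 - p.1.1.1⟫, ⟪p.1.1.2, p.2.1.2⟫)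

/-- Universality of the collection `(ι₁, ι₂, ι₃, ι₄)`: every `E(3)`-invariant function
`j : M₃ × M₃ → Z` is a function of the four invariants. -/
theorem invariants_universal {Z : Type*} (j : M3 × M3 → Z)
    (hj : ∀ (t : EuclideanSpace ℝ (Fin 3))
      (Q : EuclideanSpace ℝ (Fin 3) ≃ₗᵢ[ℝ] EuclideanSpace ℝ (Fin 3)) (p₁ p₂ : M3),
      j (E3act t Q p₁, E3act t Q p₂) = j (p₁, p₂)) :
    ∃ F : ℝ × ℝ × ℝ × ℝ → Z, ∀ p : M3 × M3, j p = F (iota p) := by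
  classical
  have key : ∀ p q : M3 × M3, iota p = iota q → j p = j q := by
    rintro ⟨⟨⟨x₁, n₁⟩, h₁⟩, ⟨⟨x₂, n₂⟩, h₂⟩⟩ ⟨⟨⟨y₁, m₁⟩, k₁⟩, ⟨⟨y₂, m₂⟩, k₂⟩⟩ hpq
    simp only [iota, Prod.mk.injEq] at hpq
    obtain ⟨e1, e2, e3, e4⟩ := hpq
    have hn₁ : ⟪n₁, n₁⟫ = ⟪m₁, m₁⟫ := by
      rw [real_inner_self_eq_norm_sq, real_inner_self_eq_norm_sq, h₁, k₁]
    have hn₂ : ⟪n₂, n₂⟫ = ⟪m₂, m₂⟫ := by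
      rw [real_inner_self_eq_norm_sq, real_inner_self_eq_norm_sq, h₂, k₂]
    obtain ⟨Q, hQ⟩ := gram_isometry ![n₁, n₂, x₂ - x₁] ![m₁, m₂, y₂ - y₁] (by
      have h2 : (⟨2, by norm_num⟩ : Fin 3) = 2 := rfl
      intro i j
      fin_cases i <;> fin_cases j <;>
        simp only [h2, Fin.isValue, Fin.mk_zero, Fin.mk_one, Matrix.cons_val_zero,
          Matrix.cons_val_one, Matrix.head_cons, Matrix.cons_val_two, Matrix.tail_cons] <;>
        first
          | exact hn₁
          | exact hn₂
          | exact e4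
          | exact e3
          | exact e1
          | exact e2
          | (rw [real_inner_comm, e4, real_inner_comm])
          | (rw [real_inner_comm, e1, real_inner_comm])
          | (rw [real_inner_comm, e2, real_inner_comm]))
    have hQ0 : Q n₁ = m₁ := hQ 0
    have hQ1 : Q n₂ = m₂ := hQ 1
    have hQ2 : Q x₂ - Q x₁ = y₂ - y₁ := by
      have := hQ 2
      simpa [map_sub] using this
    have := hj (y₁ - Q x₁) Q ⟨(x₁, n₁), h₁⟩ ⟨(x₂, n₂), h₂⟩
    rw [← this]
    congr 1
    refine Prod.ext (Subtype.ext (Prod.ext ?_ ?_)) (Subtype.ext (Prod.ext ?_ ?_))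
    · show y₁ - Q x₁ + Q x₁ = y₁
      abel
    · exact hQ0
    · show y₁ - Q x₁ + Q x₂ = y₂
      have : y₁ - Q x₁ + Q x₂ = y₁ + (Q x₂ - Q x₁) := by abel
      rw [this, hQ2]
      abel
    · exact hQ1
  refine ⟨fun r => if h : ∃ p : M3 × M3, iota p = r then j h.choose else
    j ⟨⟨(0, EuclideanSpace.single 0 1), by simp⟩, ⟨(0, EuclideanSpace.single 0 1), by simp⟩⟩,
    fun p => ?_⟩
  have h : ∃ q : M3 × M3, iota q = iota p := ⟨p, rfl⟩
  beta_reduce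
  rw [dif_pos h]
  exact (key h.choose p h.choose_spec).symm
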